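/- Let m ≥ 1 be an integer. The multiplication map P_m × Q_m → GL_m(ℝ), (p, q) ↦ pq, is injective, and its image equals the set S := { g ∈ GL_m(ℝ) : the lower-right (m−1)×(m−1) block of g is invertible }. Moreover S is open in GL_m(ℝ) and its complement GL_m(ℝ) \ S is a null set for Haar measure on GL_m(ℝ). -/

import Mathlib

open Matrix MeasureTheory

/-- Borel σ-algebra on `GL_m(ℝ)` (with its topology as a matrix group). -/
noncomputable instance (m : ℕ) : MeasurableSpace (GL (Fin m) ℝ) := borel _

/-- `P_m ⊆ GL_m(ℝ)`: matrices whose first column equals the first standard basis vector,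
i.e. matrices of the form `[1, *; 0, *]`. -/
def Pmir (m : ℕ) : Set (GL (Fin m) ℝ) :=
  {g | ∀ i j : Fin m, (j : ℕ) = 0 →
        (g : Matrix (Fin m) (Fin m) ℝ) i j = if (i : ℕ) = 0 then 1 else 0}

/-- `Q_m ⊆ GL_m(ℝ)`: matrices of the form `[*, 0; *, 1_{m-1}]`, i.e. whose last `m - 1`
columns agree with those of the identity matrix. -/
def Qmir (m : ℕ) : Set (GL (Fin m) ℝ) :=
  {g | ∀ i j : Fin m, 1 ≤ (j : ℕ) →
        (g : Matrix (Fin m) (Fin m) ℝ) i j = if i = j then 1 else 0}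

/-- `S ⊆ GL_m(ℝ)`: the invertible matrices whose lower-right `(m-1) × (m-1)` block is
invertible. -/
def Sset (m : ℕ) (hm : 1 ≤ m) : Set (GL (Fin m) ℝ) :=
  {g | IsUnit (Matrix.of fun i j : Fin (m - 1) =>
        (g : Matrix (Fin m) (Fin m) ℝ)
          ⟨(i : ℕ) + 1, by have := i.isLt; omega⟩
          ⟨(j : ℕ) + 1, by have := j.isLt; omega⟩)}

namespace MirabolicAux

variable {n : ℕ}

instance instBorelGL (m : ℕ) : BorelSpace (GL (Fin m) ℝ) := ⟨rfl⟩

/-- `embedProduct` for the matrix ring is a closed embedding. -/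
lemma isClosedEmbedding_embedProduct (m : ℕ) :
    Topology.IsClosedEmbedding (Units.embedProduct (Matrix (Fin m) (Fin m) ℝ)) := by
  refine ⟨Units.isEmbedding_embedProduct, ?_⟩
  have hrange : Set.range (Units.embedProduct (Matrix (Fin m) (Fin m) ℝ)) =
      (fun p : Matrix (Fin m) (Fin m) ℝ × (Matrix (Fin m) (Fin m) ℝ)ᵐᵒᵖ =>
        p.1 * p.2.unop) ⁻¹' {1} ∩
      (fun p : Matrix (Fin m) (Fin m) ℝ × (Matrix (Fin m) (Fin m) ℝ)ᵐᵒᵖ =>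
        p.2.unop * p.1) ⁻¹' {1} := by
    ext p
    constructor
    · rintro ⟨u, rfl⟩
      refine ⟨?_, ?_⟩ <;>
        simp only [Set.mem_preimage, Set.mem_singleton_iff, Units.embedProduct_apply,
          MulOpposite.unop_op]
      · exact u.mul_inv
      · exact u.inv_mul
    · rintro ⟨h1, h2⟩
      simp only [Set.mem_preimage, Set.mem_singleton_iff] at h1 h2
      refine ⟨⟨p.1, p.2.unop, h1, h2⟩, ?_⟩
      simp only [Units.embedProduct]
      exact Prod.ext rfl (MulOpposite.op_unop p.2)
  rw [hrange]
  exact (isClosed_singleton.preimage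
      (continuous_fst.mul (MulOpposite.continuous_unop.comp continuous_snd))).inter
    (isClosed_singleton.preimage
      ((MulOpposite.continuous_unop.comp continuous_snd).mul continuous_fst))

instance instLocCompMat (m : ℕ) : LocallyCompactSpace (Matrix (Fin m) (Fin m) ℝ) :=
  inferInstanceAs (LocallyCompactSpace (Fin m → Fin m → ℝ))

instance instSecCountMat (m : ℕ) : SecondCountableTopology (Matrix (Fin m) (Fin m) ℝ) :=
  inferInstanceAs (SecondCountableTopology (Fin m → Fin m → ℝ))

instance instLocCompMop (m : ℕ) : LocallyCompactSpace (Matrix (Fin m) (Fin m) ℝ)ᵐᵒᵖ :=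
  (MulOpposite.opHomeomorph : Matrix (Fin m) (Fin m) ℝ ≃ₜ (Matrix (Fin m) (Fin m) ℝ)ᵐᵒᵖ).symm.isClosedEmbedding.locallyCompactSpace

instance instSecCountMop (m : ℕ) : SecondCountableTopology (Matrix (Fin m) (Fin m) ℝ)ᵐᵒᵖ :=
  (MulOpposite.opHomeomorph : Matrix (Fin m) (Fin m) ℝ ≃ₜ (Matrix (Fin m) (Fin m) ℝ)ᵐᵒᵖ).symm.isEmbedding.secondCountableTopology

instance instLocCompGL (m : ℕ) : LocallyCompactSpace (GL (Fin m) ℝ) :=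
  (isClosedEmbedding_embedProduct m).locallyCompactSpace

instance instSecCountGL (m : ℕ) : SecondCountableTopology (GL (Fin m) ℝ) :=
  (isClosedEmbedding_embedProduct m).toIsEmbedding.secondCountableTopology

/-- If column `j` of `B` agrees with the identity, then column `j` of `A * B`
equals column `j` of `A`. -/
lemma mul_col (A B : Matrix (Fin (n + 1)) (Fin (n + 1)) ℝ) (j : Fin (n + 1))
    (hB : ∀ i, B i j = (1 : Matrix (Fin (n + 1)) (Fin (n + 1)) ℝ) i j) (i : Fin (n + 1)) :
    (A * B) i j = A i j := by
  rw [Matrix.mul_apply]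
  have : ∀ k, A i k * B k j = if k = j then A i k else 0 := by
    intro k
    rw [hB k, Matrix.one_apply]
    split_ifs with h <;> simp
  rw [Finset.sum_congr rfl fun k _ => this k]
  simp

/-- If `B * A = 1` and column `j` of `A` agrees with the identity, then so does
column `j` of `B`. -/
lemma inv_col (A B : Matrix (Fin (n + 1)) (Fin (n + 1)) ℝ) (hBA : B * A = 1) (j : Fin (n + 1))
    (hA : ∀ i, A i j = (1 : Matrix (Fin (n + 1)) (Fin (n + 1)) ℝ) i j) (i : Fin (n + 1)) :
    B i j = (1 : Matrix (Fin (n + 1)) (Fin (n + 1)) ℝ) i j := by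
  rw [← mul_col B A j hA i, hBA]

lemma ite_val_zero (i : Fin (n + 1)) :
    (if (i : ℕ) = 0 then (1 : ℝ) else 0) = if i = 0 then 1 else 0 := by
  by_cases h0 : i = 0
  · subst h0; simp
  · have hvi : ¬((i : ℕ) = 0) := fun hc => h0 (Fin.eq_of_val_eq hc)
    rw [if_neg hvi, if_neg h0]

lemma mem_Pmir_iff {g : GL (Fin (n + 1)) ℝ} :
    g ∈ Pmir (n + 1) ↔ ∀ i, (g : Matrix (Fin (n + 1)) (Fin (n + 1)) ℝ) i 0 =
      (1 : Matrix (Fin (n + 1)) (Fin (n + 1)) ℝ) i 0 := by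
  constructor
  · intro h i
    have := h i 0 rfl
    rw [this, Matrix.one_apply]
    exact ite_val_zero i
  · intro h i j hj
    have hj0 : j = 0 := Fin.ext (by simpa using hj)
    subst hj0
    rw [h i, Matrix.one_apply]
    exact (ite_val_zero i).symm

lemma mem_Qmir_iff {g : GL (Fin (n + 1)) ℝ} :
    g ∈ Qmir (n + 1) ↔ ∀ i j, j ≠ 0 → (g : Matrix (Fin (n + 1)) (Fin (n + 1)) ℝ) i j =
      (1 : Matrix (Fin (n + 1)) (Fin (n + 1)) ℝ) i j := by
  constructor
  · intro h i j hj
    have : 1 ≤ (j : ℕ) := by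
      have : (j : ℕ) ≠ 0 := fun h0 => hj (Fin.ext (by simpa using h0))
      omega
    rw [h i j this, Matrix.one_apply]
  · intro h i j hj
    have hj0 : j ≠ 0 := by
      intro h0; subst h0; simp at hj
    rw [h i j hj0, Matrix.one_apply]

/-- A matrix whose columns `j ≠ 0` agree with the identity has determinant equal to its
`(0,0)` entry. -/
lemma det_eq_of_qmat (A : Matrix (Fin (n + 1)) (Fin (n + 1)) ℝ)
    (hA : ∀ i j, j ≠ 0 → A i j = (1 : Matrix (Fin (n + 1)) (Fin (n + 1)) ℝ) i j) :
    A.det = A 0 0 := by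
  rw [Matrix.det_succ_row_zero, Finset.sum_eq_single 0]
  · have hsub : A.submatrix Fin.succ Fin.succ = (1 : Matrix (Fin n) (Fin n) ℝ) := by
      ext i j
      rw [Matrix.submatrix_apply, hA _ _ (Fin.succ_ne_zero j), Matrix.one_apply,
        Matrix.one_apply]
      simp [Fin.succ_inj]
    simp [Fin.succAbove_zero, hsub]
  · intro j _ hj
    rw [hA 0 j hj, Matrix.one_apply, if_neg (Ne.symm hj)]
    ring
  · simp

lemma adjugate_zero_zero (A : Matrix (Fin (n + 1)) (Fin (n + 1)) ℝ) :
    A.adjugate 0 0 = (A.submatrix Fin.succ Fin.succ).det := by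
  rw [Matrix.adjugate_apply, Matrix.det_succ_row_zero, Finset.sum_eq_single 0]
  · have hsub : (A.updateRow 0 (Pi.single 0 1)).submatrix Fin.succ Fin.succ =
        A.submatrix Fin.succ Fin.succ := by
      ext i j
      simp [Matrix.submatrix_apply, Matrix.updateRow_ne (Fin.succ_ne_zero i)]
    simp [Fin.succAbove_zero, hsub, Matrix.updateRow_self]
  · intro j _ hj
    rw [Matrix.updateRow_self]
    rw [Pi.single_eq_of_ne (Ne.symm (Ne.symm hj))]
    ring
  · simp

lemma mem_Sset_iff (hm : 1 ≤ n + 1) (g : GL (Fin (n + 1)) ℝ) :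
    g ∈ Sset (n + 1) hm ↔
      ((g⁻¹ : GL (Fin (n + 1)) ℝ) : Matrix (Fin (n + 1)) (Fin (n + 1)) ℝ) 0 0 ≠ 0 := by
  have hblock : g ∈ Sset (n + 1) hm ↔
      IsUnit ((g : Matrix (Fin (n + 1)) (Fin (n + 1)) ℝ).submatrix Fin.succ Fin.succ) :=
    Iff.rfl
  rw [hblock, Matrix.isUnit_iff_isUnit_det, isUnit_iff_ne_zero, ← adjugate_zero_zero]
  set A := (g : Matrix (Fin (n + 1)) (Fin (n + 1)) ℝ)
  set B := ((g⁻¹ : GL (Fin (n + 1)) ℝ) : Matrix (Fin (n + 1)) (Fin (n + 1)) ℝ)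
  have hBA : B * A = 1 := g.inv_mul
  have hadj : A.adjugate = A.det • B := by
    have h1 : B * (A * A.adjugate) = B * (A.det • 1) := by rw [Matrix.mul_adjugate]
    rw [← Matrix.mul_assoc, hBA, Matrix.one_mul, Matrix.mul_smul, Matrix.mul_one] at h1
    exact h1
  have hdet : A.det ≠ 0 := by
    have := (Matrix.isUnit_iff_isUnit_det A).mp g.isUnit
    exact isUnit_iff_ne_zero.mp this
  rw [hadj]
  simp only [Matrix.smul_apply, smul_eq_mul]
  constructor
  · intro h h0; exact h (by rw [h0, mul_zero])
  · exact fun h => mul_ne_zero hdet h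

lemma isOpen_Sset (hm : 1 ≤ n + 1) : IsOpen (Sset (n + 1) hm) := by
  have hS : Sset (n + 1) hm =
      (fun g : GL (Fin (n + 1)) ℝ =>
        ((g : Matrix (Fin (n + 1)) (Fin (n + 1)) ℝ).submatrix Fin.succ Fin.succ).det) ⁻¹'
        {(0 : ℝ)}ᶜ := by
    ext g
    have hblock : g ∈ Sset (n + 1) hm ↔
        IsUnit ((g : Matrix (Fin (n + 1)) (Fin (n + 1)) ℝ).submatrix Fin.succ Fin.succ) :=
      Iff.rfl
    simp only [Set.mem_preimage, Set.mem_compl_iff, Set.mem_singleton_iff, hblock,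
      Matrix.isUnit_iff_isUnit_det, isUnit_iff_ne_zero]
  rw [hS]
  exact isOpen_compl_singleton.preimage
    ((Units.continuous_val.matrix_submatrix Fin.succ Fin.succ).matrix_det)

end MirabolicAux

/-- For `m ≥ 1`, the multiplication map `P_m × Q_m → GL_m(ℝ)` is injective, its image is
the set `S` of invertible matrices with invertible lower-right `(m-1) × (m-1)` block,
`S` is open, and the complement of `S` is null for every Haar measure on `GL_m(ℝ)`. -/
theorem mirabolic_decomposition (m : ℕ) (hm : 1 ≤ m) :
    (∀ p₁ p₂ q₁ q₂ : GL (Fin m) ℝ, p₁ ∈ Pmir m → p₂ ∈ Pmir m → q₁ ∈ Qmir m →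
        q₂ ∈ Qmir m → p₁ * q₁ = p₂ * q₂ → p₁ = p₂ ∧ q₁ = q₂) ∧
    ({g : GL (Fin m) ℝ | ∃ p ∈ Pmir m, ∃ q ∈ Qmir m, g = p * q} = Sset m hm) ∧
    IsOpen (Sset m hm) ∧
    (∀ (μ : Measure (GL (Fin m) ℝ)), μ.IsHaarMeasure → μ (Sset m hm)ᶜ = 0) := by
  obtain ⟨n, rfl⟩ : ∃ n, m = n + 1 := ⟨m - 1, (Nat.succ_pred_eq_of_pos hm).symm⟩
  open MirabolicAux in
  refine ⟨?_, ?_, ?_, ?_⟩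
  · -- injectivity
    intro p₁ p₂ q₁ q₂ hp₁ hp₂ hq₁ hq₂ heq
    rw [MirabolicAux.mem_Pmir_iff] at hp₁ hp₂
    rw [MirabolicAux.mem_Qmir_iff] at hq₁ hq₂
    have hr : p₂⁻¹ * p₁ = q₂ * q₁⁻¹ := by
      calc p₂⁻¹ * p₁ = p₂⁻¹ * (p₁ * q₁) * q₁⁻¹ := by group
        _ = p₂⁻¹ * (p₂ * q₂) * q₁⁻¹ := by rw [heq]
        _ = q₂ * q₁⁻¹ := by group
    have hPcol : ∀ i, ((p₂⁻¹ * p₁ : GL (Fin (n + 1)) ℝ) :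
        Matrix (Fin (n + 1)) (Fin (n + 1)) ℝ) i 0 =
        (1 : Matrix (Fin (n + 1)) (Fin (n + 1)) ℝ) i 0 := by
      intro i
      rw [Units.val_mul]
      rw [MirabolicAux.mul_col _ _ 0 hp₁ i]
      exact MirabolicAux.inv_col _ _ p₂.inv_mul 0 hp₂ i
    have hQcol : ∀ i j, j ≠ 0 → ((q₂ * q₁⁻¹ : GL (Fin (n + 1)) ℝ) :
        Matrix (Fin (n + 1)) (Fin (n + 1)) ℝ) i j =
        (1 : Matrix (Fin (n + 1)) (Fin (n + 1)) ℝ) i j := by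
      intro i j hj
      rw [Units.val_mul]
      rw [MirabolicAux.mul_col _ _ j
        (fun i => MirabolicAux.inv_col _ _ q₁.inv_mul j (fun i => hq₁ i j hj) i) i]
      exact hq₂ i j hj
    have hone : (p₂⁻¹ * p₁ : GL (Fin (n + 1)) ℝ) = 1 := by
      refine Units.ext ?_
      rw [Units.val_one]
      ext i j
      by_cases hj : j = 0
      · subst hj; exact hPcol i
      · rw [hr]; exact hQcol i j hj
    constructor
    · exact (inv_mul_eq_one.mp hone).symm
    · have h2 : q₂ * q₁⁻¹ = 1 := hr ▸ hone
      exact (mul_inv_eq_one.mp h2).symm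
  · -- image = S
    ext g
    simp only [Set.mem_setOf_eq]
    rw [MirabolicAux.mem_Sset_iff]
    constructor
    · rintro ⟨p, hp, q, hq, rfl⟩
      rw [MirabolicAux.mem_Pmir_iff] at hp
      rw [MirabolicAux.mem_Qmir_iff] at hq
      have hpinv : ∀ i, ((p⁻¹ : GL (Fin (n + 1)) ℝ) :
          Matrix (Fin (n + 1)) (Fin (n + 1)) ℝ) i 0 =
          (1 : Matrix (Fin (n + 1)) (Fin (n + 1)) ℝ) i 0 :=
        fun i => MirabolicAux.inv_col _ _ p.inv_mul 0 hp i
      have hqinv : ∀ i j, j ≠ 0 → ((q⁻¹ : GL (Fin (n + 1)) ℝ) :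
          Matrix (Fin (n + 1)) (Fin (n + 1)) ℝ) i j =
          (1 : Matrix (Fin (n + 1)) (Fin (n + 1)) ℝ) i j :=
        fun i j hj => MirabolicAux.inv_col _ _ q.inv_mul j (fun i => hq i j hj) i
      have h1 : (((p * q)⁻¹ : GL (Fin (n + 1)) ℝ) :
          Matrix (Fin (n + 1)) (Fin (n + 1)) ℝ) 0 0 =
          ((q⁻¹ : GL (Fin (n + 1)) ℝ) : Matrix (Fin (n + 1)) (Fin (n + 1)) ℝ) 0 0 := by
        rw [_root_.mul_inv_rev, Units.val_mul]
        exact MirabolicAux.mul_col _ _ 0 hpinv 0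
      rw [h1, ← MirabolicAux.det_eq_of_qmat _ hqinv]
      exact isUnit_iff_ne_zero.mp ((Matrix.isUnit_iff_isUnit_det _).mp (q⁻¹).isUnit)
    · intro hg
      set B := ((g⁻¹ : GL (Fin (n + 1)) ℝ) : Matrix (Fin (n + 1)) (Fin (n + 1)) ℝ) with hB
      set Qc : Matrix (Fin (n + 1)) (Fin (n + 1)) ℝ := Matrix.of fun i j =>
        if j = 0 then B i 0 else (1 : Matrix (Fin (n + 1)) (Fin (n + 1)) ℝ) i j with hQc
      have hQcq : ∀ i j, j ≠ 0 → Qc i j = (1 : Matrix (Fin (n + 1)) (Fin (n + 1)) ℝ) i j := by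
        intro i j hj; simp [hQc, hj]
      have hQccol : ∀ k, Qc k 0 = B k 0 := by intro k; simp [hQc]
      have hdet : Qc.det ≠ 0 := by
        rw [MirabolicAux.det_eq_of_qmat _ hQcq, hQccol]; exact hg
      obtain ⟨u, hu⟩ := (Matrix.isUnit_iff_isUnit_det Qc).mpr (isUnit_iff_ne_zero.mpr hdet)
      refine ⟨g * u, ?_, u⁻¹, ?_, ?_⟩
      · rw [MirabolicAux.mem_Pmir_iff]
        intro i
        rw [Units.val_mul, hu]
        have hgB : (g : Matrix (Fin (n + 1)) (Fin (n + 1)) ℝ) * B = 1 := g.mul_inv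
        calc ((g : Matrix (Fin (n + 1)) (Fin (n + 1)) ℝ) * Qc) i 0
            = ((g : Matrix (Fin (n + 1)) (Fin (n + 1)) ℝ) * B) i 0 := by
              simp only [Matrix.mul_apply]
              exact Finset.sum_congr rfl fun k _ => by rw [hQccol k]
          _ = (1 : Matrix (Fin (n + 1)) (Fin (n + 1)) ℝ) i 0 := by rw [hgB]
      · rw [MirabolicAux.mem_Qmir_iff]
        intro i j hj
        exact MirabolicAux.inv_col Qc _ (by rw [← hu] at *; exact u.inv_mul) j
          (fun i => hQcq i j hj) i
      · rw [mul_inv_cancel_right]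
  · exact MirabolicAux.isOpen_Sset hm
  · -- null complement
    intro μ hμ
    haveI := hμ
    haveI : SigmaFinite μ := by infer_instance
    -- the one-parameter family
    set V : ℝ → Matrix (Fin (n + 1)) (Fin (n + 1)) ℝ := fun t => Matrix.of fun i j =>
      if j = 0 then t ^ (i : ℕ) else if i = j then 1 else 0 with hV
    have hVq : ∀ t, ∀ i j, j ≠ 0 →
        V t i j = (1 : Matrix (Fin (n + 1)) (Fin (n + 1)) ℝ) i j := by
      intro t i j hj
      simp [hV, hj, Matrix.one_apply]
    have hVdet : ∀ t, (V t).det ≠ 0 := by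
      intro t
      rw [MirabolicAux.det_eq_of_qmat _ (hVq t)]
      simp [hV]
    set w : ℝ → GL (Fin (n + 1)) ℝ := fun t =>
      Matrix.GeneralLinearGroup.mkOfDetNeZero (V t) (hVdet t) with hw
    have hwval : ∀ t, ((w t : GL (Fin (n + 1)) ℝ) :
        Matrix (Fin (n + 1)) (Fin (n + 1)) ℝ) = V t := fun t => rfl
    set T : Set (ℝ × GL (Fin (n + 1)) ℝ) := {p |
      (((p.2⁻¹ : GL (Fin (n + 1)) ℝ) : Matrix (Fin (n + 1)) (Fin (n + 1)) ℝ) * V p.1) 0 0 = 0}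
      with hT
    have hTmeas : MeasurableSet T := by
      have hcont : Continuous fun p : ℝ × GL (Fin (n + 1)) ℝ =>
          (((p.2⁻¹ : GL (Fin (n + 1)) ℝ) : Matrix (Fin (n + 1)) (Fin (n + 1)) ℝ) * V p.1) 0 0 := by
        have hA : Continuous fun p : ℝ × GL (Fin (n + 1)) ℝ =>
            ((p.2⁻¹ : GL (Fin (n + 1)) ℝ) : Matrix (Fin (n + 1)) (Fin (n + 1)) ℝ) :=
          Units.continuous_coe_inv.comp continuous_snd
        have hB : Continuous fun p : ℝ × GL (Fin (n + 1)) ℝ => V p.1 := by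
          apply continuous_matrix
          intro i j
          by_cases hj : j = 0
          · simp only [hV, Matrix.of_apply, hj, if_pos]
            exact (continuous_pow _).comp continuous_fst
          · simp only [hV, Matrix.of_apply, hj, if_neg, if_false]
            exact continuous_const
        exact ((hA.matrix_mul hB).matrix_elem 0 0)
      exact hcont.measurable (measurableSet_singleton 0)
    -- t-slices have measure μ Ssetᶜ
    have hslice1 : ∀ t : ℝ, Prod.mk t ⁻¹' T =
        (fun g : GL (Fin (n + 1)) ℝ => (w t)⁻¹ * g) ⁻¹' (Sset (n + 1) hm)ᶜ := by
      intro t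
      ext g
      simp only [Set.mem_preimage, Set.mem_compl_iff, MirabolicAux.mem_Sset_iff hm, not_not,
        hT, Set.mem_setOf_eq]
      rw [_root_.mul_inv_rev, inv_inv, Units.val_mul, hwval]
    have hμslice : ∀ t : ℝ, μ (Prod.mk t ⁻¹' T) = μ (Sset (n + 1) hm)ᶜ := by
      intro t
      rw [hslice1 t]
      exact measure_preimage_mul μ ((w t)⁻¹) _
    -- g-slices are Lebesgue-null
    have hslice2 : ∀ g : GL (Fin (n + 1)) ℝ,
        (volume : Measure ℝ) ((fun t => (t, g)) ⁻¹' T) = 0 := by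
      intro g
      set B := ((g⁻¹ : GL (Fin (n + 1)) ℝ) : Matrix (Fin (n + 1)) (Fin (n + 1)) ℝ) with hB
      have hrow : ∃ k, B 0 k ≠ 0 := by
        by_contra h
        push_neg at h
        have h1 : (B * (g : Matrix (Fin (n + 1)) (Fin (n + 1)) ℝ)) 0 0 = 1 := by
          rw [g.inv_mul]; simp [Matrix.one_apply]
        rw [Matrix.mul_apply] at h1
        simp only [h, zero_mul, Finset.sum_const_zero] at h1
        exact zero_ne_one h1
      set P : Polynomial ℝ := ∑ k : Fin (n + 1), Polynomial.C (B 0 k) *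
        Polynomial.X ^ (k : ℕ) with hP
      have hPne : P ≠ 0 := by
        obtain ⟨k, hk⟩ := hrow
        intro h0
        have hcoeff : P.coeff (k : ℕ) = B 0 k := by
          rw [hP, Polynomial.finset_sum_coeff, Finset.sum_eq_single k]
          · simp [Polynomial.coeff_C_mul, Polynomial.coeff_X_pow]
          · intro b _ hb
            have hbk : ¬((k : ℕ) = (b : ℕ)) := fun h => hb (Fin.ext h.symm)
            simp [Polynomial.coeff_C_mul, Polynomial.coeff_X_pow, hbk]
          · simp
        rw [h0, Polynomial.coeff_zero] at hcoeff
        exact hk hcoeff.symm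
      have hsub : ((fun t => (t, g)) ⁻¹' T) ⊆ {t : ℝ | P.IsRoot t} := by
        intro t ht
        simp only [Set.mem_preimage, hT, Set.mem_setOf_eq] at ht
        show P.eval t = 0
        rw [← ht, Matrix.mul_apply]
        rw [hP]
        simp only [Polynomial.eval_finset_sum, Polynomial.eval_mul, Polynomial.eval_C,
          Polynomial.eval_pow, Polynomial.eval_X]
        refine Finset.sum_congr rfl fun k _ => ?_
        have : V t k 0 = t ^ (k : ℕ) := by simp [hV]
        rw [this, ← hB]
      exact measure_mono_null hsub
        ((Polynomial.finite_setOf_isRoot hPne).measure_zero _)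
    -- Fubini
    set ν : Measure ℝ := volume.restrict (Set.Icc (0 : ℝ) 1) with hν
    have key : (ν.prod μ) T = μ (Sset (n + 1) hm)ᶜ := by
      rw [Measure.prod_apply hTmeas]
      simp_rw [hμslice]
      rw [lintegral_const, hν, Measure.restrict_apply_univ, Real.volume_Icc]
      norm_num
    have hzero : (ν.prod μ) T = 0 := by
      rw [Measure.prod_apply_symm hTmeas]
      have hz : ∀ g : GL (Fin (n + 1)) ℝ, ν ((fun t => (t, g)) ⁻¹' T) = 0 := by
        intro g
        refine le_antisymm ?_ zero_le
        calc ν ((fun t => (t, g)) ⁻¹' T) ≤ (volume : Measure ℝ) ((fun t => (t, g)) ⁻¹' T) :=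
              Measure.restrict_le_self _
          _ = 0 := hslice2 g
      simp_rw [hz]
      exact lintegral_zero
    rw [← key, hzero]
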